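/- Let κ,ε>0, λ≥0, M>0, and let ρ : [0,1] → ℝ be differentiable with continuous derivative ρ_x satisfying |ρ_x(x)| ≤ M on [0,1] and ρ_x nowhere zero. Let θ ∈ L²(0,1). Suppose u satisfies Bu = θ (with u/ρ_x four times continuously differentiable, u(0)=u(1)=0, (u/ρ_x)''(0)=(u/ρ_x)''(1)=0), and suppose w_M is four times continuously differentiable with ε w_M'''' − λ w_M'' + (κ+M²) w_M = ρ_x θ on (0,1) and w_M(0)=w_M(1)=w_M''(0)=w_M''(1)=0. Then ∫₀¹ θ u dx ≥ ∫₀¹ (θ ρ_x) w_M dx; equivalently, ∫₀¹ θ² − ∫₀¹ θ u ≤ ∫₀¹ θ² − ∫₀¹ (θρ_x) w_M, i.e., I − B^{-1} ⪯ I − M_{ρ_x} L_M^{-1} M_{ρ_x}. -/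

import Mathlib

open MeasureTheory Set intervalIntegral

/-- The operator `B` associated with the HV Hessian:
`Bv = (1/ρ_x)[ε (v/ρ_x)'''' − λ (v/ρ_x)'' + (v/ρ_x)(κ + ρ_x²)]`,
where `ρx` denotes the derivative `ρ_x`. -/
noncomputable def Bop (κ lam ε : ℝ) (ρx : ℝ → ℝ) (v : ℝ → ℝ) (x : ℝ) : ℝ :=
  (1 / ρx x) * (ε * iteratedDeriv 4 (fun y => v y / ρx y) x
    - lam * iteratedDeriv 2 (fun y => v y / ρx y) x
    + (v x / ρx x) * (κ + (ρx x) ^ 2))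

section helpers
variable {a b : ℝ → ℝ}
lemma hda_iter (hf : ContDiff ℝ 4 a) {n : ℕ} (hn : n < 4) (x : ℝ) :
    HasDerivAt (iteratedDeriv n a) (iteratedDeriv (n+1) a x) x := by
  have h := (hf.differentiable_iteratedDeriv n (by exact_mod_cast hn)).differentiableAt (x := x)
  rw [iteratedDeriv_succ]
  exact h.hasDerivAt
lemma cont_iter (hf : ContDiff ℝ 4 a) {n : ℕ} (hn : n ≤ 4) :
    Continuous (iteratedDeriv n a) :=
  hf.continuous_iteratedDeriv n (by exact_mod_cast hn)
lemma ibp0 (A B A' B' : ℝ → ℝ)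
    (hA : ∀ x, HasDerivAt A (A' x) x) (hB : ∀ x, HasDerivAt B (B' x) x)
    (hA' : Continuous A') (hB' : Continuous B')
    (hB0 : B 0 = 0) (hB1 : B 1 = 0) :
    ∫ x in (0:ℝ)..1, A' x * B x = - ∫ x in (0:ℝ)..1, A x * B' x := by
  have h := intervalIntegral.integral_mul_deriv_eq_deriv_mul
    (a := (0:ℝ)) (b := 1) (u := B) (v := A) (u' := B') (v' := A')
    (fun x _ => hB x) (fun x _ => hA x)
    (hB'.intervalIntegrable 0 1) (hA'.intervalIntegrable 0 1)
  rw [hB0, hB1] at h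
  have h2 : ∫ x in (0:ℝ)..1, A' x * B x = ∫ x in (0:ℝ)..1, B x * A' x :=
    intervalIntegral.integral_congr (fun x _ => mul_comm _ _)
  have h3 : ∫ x in (0:ℝ)..1, B' x * A x = ∫ x in (0:ℝ)..1, A x * B' x :=
    intervalIntegral.integral_congr (fun x _ => mul_comm _ _)
  rw [h2, h]
  simp [h3]
lemma ibp2 (ha : ContDiff ℝ 4 a) (hb : ContDiff ℝ 4 b)
    (hb0 : b 0 = 0) (hb1 : b 1 = 0) :
    ∫ x in (0:ℝ)..1, iteratedDeriv 2 a x * b x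
      = - ∫ x in (0:ℝ)..1, iteratedDeriv 1 a x * iteratedDeriv 1 b x :=
  ibp0 (iteratedDeriv 1 a) b (iteratedDeriv 2 a) (iteratedDeriv 1 b)
    (fun x => hda_iter ha (by norm_num) x)
    (fun x => by simpa [iteratedDeriv_zero] using hda_iter hb (by norm_num) x (n := 0))
    (cont_iter ha (by norm_num)) (cont_iter hb (by norm_num)) hb0 hb1
lemma ibp4 (ha : ContDiff ℝ 4 a) (hb : ContDiff ℝ 4 b)
    (ha20 : iteratedDeriv 2 a 0 = 0) (ha21 : iteratedDeriv 2 a 1 = 0)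
    (hb0 : b 0 = 0) (hb1 : b 1 = 0) :
    ∫ x in (0:ℝ)..1, iteratedDeriv 4 a x * b x
      = ∫ x in (0:ℝ)..1, iteratedDeriv 2 a x * iteratedDeriv 2 b x := by
  have s1 : ∫ x in (0:ℝ)..1, iteratedDeriv 4 a x * b x
      = - ∫ x in (0:ℝ)..1, iteratedDeriv 3 a x * iteratedDeriv 1 b x :=
    ibp0 (iteratedDeriv 3 a) b (iteratedDeriv 4 a) (iteratedDeriv 1 b)
      (fun x => hda_iter ha (by norm_num) x)
      (fun x => by simpa [iteratedDeriv_zero] using hda_iter hb (by norm_num) x (n := 0))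
      (cont_iter ha (by norm_num)) (cont_iter hb (by norm_num)) hb0 hb1
  have s2 : ∫ x in (0:ℝ)..1, iteratedDeriv 2 b x * iteratedDeriv 2 a x
      = - ∫ x in (0:ℝ)..1, iteratedDeriv 1 b x * iteratedDeriv 3 a x :=
    ibp0 (iteratedDeriv 1 b) (iteratedDeriv 2 a) (iteratedDeriv 2 b) (iteratedDeriv 3 a)
      (fun x => hda_iter hb (by norm_num) x)
      (fun x => hda_iter ha (by norm_num) x)
      (cont_iter hb (by norm_num)) (cont_iter ha (by norm_num)) ha20 ha21
  have c1 : ∫ x in (0:ℝ)..1, iteratedDeriv 2 b x * iteratedDeriv 2 a x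
      = ∫ x in (0:ℝ)..1, iteratedDeriv 2 a x * iteratedDeriv 2 b x :=
    intervalIntegral.integral_congr (fun x _ => mul_comm _ _)
  have c2 : ∫ x in (0:ℝ)..1, iteratedDeriv 1 b x * iteratedDeriv 3 a x
      = ∫ x in (0:ℝ)..1, iteratedDeriv 3 a x * iteratedDeriv 1 b x :=
    intervalIntegral.integral_congr (fun x _ => mul_comm _ _)
  rw [s1, ← c1, s2, c2]
lemma main_ibp (κ lam ε : ℝ) (ha : ContDiff ℝ 4 a) (hb : ContDiff ℝ 4 b)
    (ha20 : iteratedDeriv 2 a 0 = 0) (ha21 : iteratedDeriv 2 a 1 = 0)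
    (hb0 : b 0 = 0) (hb1 : b 1 = 0) (c : ℝ → ℝ) (hc : Continuous c) :
    ∫ x in (0:ℝ)..1,
        (ε * iteratedDeriv 4 a x - lam * iteratedDeriv 2 a x + (κ + c x) * a x) * b x
      = ∫ x in (0:ℝ)..1, (ε * (iteratedDeriv 2 a x * iteratedDeriv 2 b x)
          + lam * (iteratedDeriv 1 a x * iteratedDeriv 1 b x) + (κ + c x) * (a x * b x)) := by
  have ca := ha.continuous
  have cb := hb.continuous
  have c1a := cont_iter ha (n := 1) (by norm_num)
  have c2a := cont_iter ha (n := 2) (by norm_num)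
  have c4a := cont_iter ha (n := 4) (by norm_num)
  have c1b := cont_iter hb (n := 1) (by norm_num)
  have c2b := cont_iter hb (n := 2) (by norm_num)
  have I4 : IntervalIntegrable (fun x => ε * (iteratedDeriv 4 a x * b x)) volume 0 1 :=
    (Continuous.intervalIntegrable (by fun_prop) 0 1)
  have I2 : IntervalIntegrable (fun x => lam * (iteratedDeriv 2 a x * b x)) volume 0 1 :=
    (Continuous.intervalIntegrable (by fun_prop) 0 1)
  have I0 : IntervalIntegrable (fun x => (κ + c x) * (a x * b x)) volume 0 1 :=
    (Continuous.intervalIntegrable (by fun_prop) 0 1)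
  have e1 : ∫ x in (0:ℝ)..1,
        (ε * iteratedDeriv 4 a x - lam * iteratedDeriv 2 a x + (κ + c x) * a x) * b x
      = ∫ x in (0:ℝ)..1, (ε * (iteratedDeriv 4 a x * b x)
          - lam * (iteratedDeriv 2 a x * b x) + (κ + c x) * (a x * b x)) :=
    intervalIntegral.integral_congr (fun x _ => by ring)
  rw [e1, intervalIntegral.integral_add (I4.sub I2) I0, intervalIntegral.integral_sub I4 I2,
    intervalIntegral.integral_const_mul, intervalIntegral.integral_const_mul,
    ibp4 ha hb ha20 ha21 hb0 hb1, ibp2 ha hb hb0 hb1]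
  have J2 : IntervalIntegrable (fun x => ε * (iteratedDeriv 2 a x * iteratedDeriv 2 b x)) volume 0 1 :=
    (Continuous.intervalIntegrable (by fun_prop) 0 1)
  have J1 : IntervalIntegrable (fun x => lam * (iteratedDeriv 1 a x * iteratedDeriv 1 b x)) volume 0 1 :=
    (Continuous.intervalIntegrable (by fun_prop) 0 1)
  rw [intervalIntegral.integral_add (J2.add J1) I0, intervalIntegral.integral_add J2 J1,
    intervalIntegral.integral_const_mul, intervalIntegral.integral_const_mul]
  ring

lemma quad_compare (κ lam ε M : ℝ) (hκ : 0 < κ) (hlam : 0 ≤ lam) (hε : 0 < ε)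
    (c : ℝ → ℝ) (hc : Continuous c) (hcM : ∀ x ∈ Icc (0:ℝ) 1, 0 ≤ c x ∧ c x ≤ M ^ 2)
    (g w : ℝ → ℝ) (hg : ContDiff ℝ 4 g) (hw : ContDiff ℝ 4 w)
    (hg0 : g 0 = 0) (hg1 : g 1 = 0)
    (hg20 : iteratedDeriv 2 g 0 = 0) (hg21 : iteratedDeriv 2 g 1 = 0)
    (hw0 : w 0 = 0) (hw1 : w 1 = 0)
    (hw20 : iteratedDeriv 2 w 0 = 0) (hw21 : iteratedDeriv 2 w 1 = 0)
    (heq : (∫ x in (0:ℝ)..1,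
        (ε * iteratedDeriv 4 g x - lam * iteratedDeriv 2 g x + (κ + c x) * g x) * w x)
      = ∫ x in (0:ℝ)..1,
        (ε * iteratedDeriv 4 w x - lam * iteratedDeriv 2 w x + (κ + M ^ 2) * w x) * w x) :
    (∫ x in (0:ℝ)..1,
        (ε * iteratedDeriv 4 g x - lam * iteratedDeriv 2 g x + (κ + c x) * g x) * w x)
      ≤ ∫ x in (0:ℝ)..1,
        (ε * iteratedDeriv 4 g x - lam * iteratedDeriv 2 g x + (κ + c x) * g x) * g x := by
  have cg := hg.continuous
  have cw := hw.continuous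
  have c1g := cont_iter hg (n := 1) (by norm_num)
  have c2g := cont_iter hg (n := 2) (by norm_num)
  have c1w := cont_iter hw (n := 1) (by norm_num)
  have c2w := cont_iter hw (n := 2) (by norm_num)
  have E1 := main_ibp κ lam ε hg hg hg20 hg21 hg0 hg1 c hc
  have E2 := main_ibp κ lam ε hg hw hg20 hg21 hw0 hw1 c hc
  have E3 := main_ibp κ lam ε hw hw hw20 hw21 hw0 hw1 (fun _ => M ^ 2) continuous_const
  -- integrability of quadratic-form integrands
  have IFgg : IntervalIntegrable (fun x => ε * (iteratedDeriv 2 g x * iteratedDeriv 2 g x)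
      + lam * (iteratedDeriv 1 g x * iteratedDeriv 1 g x) + (κ + c x) * (g x * g x)) volume 0 1 :=
    (Continuous.intervalIntegrable (by fun_prop) 0 1)
  have IFgw : IntervalIntegrable (fun x => ε * (iteratedDeriv 2 g x * iteratedDeriv 2 w x)
      + lam * (iteratedDeriv 1 g x * iteratedDeriv 1 w x) + (κ + c x) * (g x * w x)) volume 0 1 :=
    (Continuous.intervalIntegrable (by fun_prop) 0 1)
  have IFww : IntervalIntegrable (fun x => ε * (iteratedDeriv 2 w x * iteratedDeriv 2 w x)
      + lam * (iteratedDeriv 1 w x * iteratedDeriv 1 w x) + (κ + c x) * (w x * w x)) volume 0 1 :=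
    (Continuous.intervalIntegrable (by fun_prop) 0 1)
  have IFMww : IntervalIntegrable (fun x => ε * (iteratedDeriv 2 w x * iteratedDeriv 2 w x)
      + lam * (iteratedDeriv 1 w x * iteratedDeriv 1 w x) + (κ + M ^ 2) * (w x * w x)) volume 0 1 :=
    (Continuous.intervalIntegrable (by fun_prop) 0 1)
  set Qgg := ∫ x in (0:ℝ)..1, (ε * (iteratedDeriv 2 g x * iteratedDeriv 2 g x)
      + lam * (iteratedDeriv 1 g x * iteratedDeriv 1 g x) + (κ + c x) * (g x * g x)) with hQgg
  set Qgw := ∫ x in (0:ℝ)..1, (ε * (iteratedDeriv 2 g x * iteratedDeriv 2 w x)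
      + lam * (iteratedDeriv 1 g x * iteratedDeriv 1 w x) + (κ + c x) * (g x * w x)) with hQgw
  set Qww := ∫ x in (0:ℝ)..1, (ε * (iteratedDeriv 2 w x * iteratedDeriv 2 w x)
      + lam * (iteratedDeriv 1 w x * iteratedDeriv 1 w x) + (κ + c x) * (w x * w x)) with hQww
  set QM := ∫ x in (0:ℝ)..1, (ε * (iteratedDeriv 2 w x * iteratedDeriv 2 w x)
      + lam * (iteratedDeriv 1 w x * iteratedDeriv 1 w x) + (κ + M ^ 2) * (w x * w x)) with hQM
  -- positivity of Q(g-w, g-w)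
  have pos1 : 0 ≤ Qgg - 2 * Qgw + Qww := by
    have key : Qgg - 2 * Qgw + Qww = ∫ x in (0:ℝ)..1,
        (ε * (iteratedDeriv 2 g x - iteratedDeriv 2 w x) ^ 2
          + lam * (iteratedDeriv 1 g x - iteratedDeriv 1 w x) ^ 2
          + (κ + c x) * (g x - w x) ^ 2) := by
      rw [hQgg, hQgw, hQww, ← intervalIntegral.integral_const_mul,
        ← intervalIntegral.integral_sub IFgg (IFgw.const_mul 2),
        ← intervalIntegral.integral_add ((IFgg.sub (IFgw.const_mul 2))) IFww]
      exact intervalIntegral.integral_congr (fun x _ => by ring)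
    rw [key]
    apply intervalIntegral.integral_nonneg zero_le_one
    intro x hx
    have hc0 := (hcM x hx).1
    exact add_nonneg (add_nonneg (mul_nonneg hε.le (sq_nonneg _))
      (mul_nonneg hlam (sq_nonneg _)))
      (mul_nonneg (add_nonneg hκ.le hc0) (sq_nonneg _))
  have pos2 : Qww ≤ QM := by
    rw [hQww, hQM]
    apply intervalIntegral.integral_mono_on zero_le_one IFww IFMww
    intro x hx
    have hcle := (hcM x hx).2
    have : (κ + c x) * (w x * w x) ≤ (κ + M ^ 2) * (w x * w x) :=
      mul_le_mul_of_nonneg_right (by linarith) (mul_self_nonneg _)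
    linarith
  have hQgwM : Qgw = QM := by rw [← E2, heq, E3]
  rw [E2, E1]
  linarith
end helpers


/-- The upper comparison `I − B⁻¹ ⪯ I − M_{ρ_x} L_M⁻¹ M_{ρ_x}`:
if `Bu = θ` and `w_M` solves the constant-coefficient problem
`ε w_M'''' − λ w_M'' + (κ+M²) w_M = ρ_x θ` with `w_M = w_M'' = 0` at `x ∈ {0,1}`, then
`∫₀¹ θ u ≥ ∫₀¹ (θ ρ_x) w_M`; equivalently `∫θ² − ∫θu ≤ ∫θ² − ∫(θρ_x)w_M`. -/
theorem hessian_upper_comparison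
    (κ lam ε M : ℝ) (hκ : 0 < κ) (hlam : 0 ≤ lam) (hε : 0 < ε) (hM : 0 < M)
    (ρ : ℝ → ℝ) (hρ : Differentiable ℝ ρ) (hρx : Continuous (deriv ρ))
    (hbnd : ∀ x ∈ Icc (0:ℝ) 1, deriv ρ x ≠ 0 ∧ |deriv ρ x| ≤ M)
    (θ : ℝ → ℝ) (hθ : MemLp θ 2 (volume.restrict (Ioo (0:ℝ) 1)))
    (u : ℝ → ℝ) (hu : ContDiff ℝ 4 (fun x => u x / deriv ρ x))
    (hu0 : u 0 = 0) (hu1 : u 1 = 0)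
    (hu''0 : iteratedDeriv 2 (fun x => u x / deriv ρ x) 0 = 0)
    (hu''1 : iteratedDeriv 2 (fun x => u x / deriv ρ x) 1 = 0)
    (hBu : ∀ x ∈ Ioo (0:ℝ) 1, Bop κ lam ε (deriv ρ) u x = θ x)
    (wM : ℝ → ℝ) (hwM : ContDiff ℝ 4 wM)
    (hwMeq : ∀ x ∈ Ioo (0:ℝ) 1,
      ε * iteratedDeriv 4 wM x - lam * iteratedDeriv 2 wM x + (κ + M ^ 2) * wM x
        = deriv ρ x * θ x)
    (hwM0 : wM 0 = 0) (hwM1 : wM 1 = 0)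
    (hwM''0 : iteratedDeriv 2 wM 0 = 0) (hwM''1 : iteratedDeriv 2 wM 1 = 0) :
    (∫ x in (0:ℝ)..1, (θ x * deriv ρ x) * wM x) ≤ (∫ x in (0:ℝ)..1, θ x * u x) ∧
    ((∫ x in (0:ℝ)..1, (θ x) ^ 2) - (∫ x in (0:ℝ)..1, θ x * u x))
      ≤ ((∫ x in (0:ℝ)..1, (θ x) ^ 2) - ∫ x in (0:ℝ)..1, (θ x * deriv ρ x) * wM x) := by
  simp only [Bop] at hBu
  set g : ℝ → ℝ := fun x => u x / deriv ρ x with hgdef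
  have hg0 : g 0 = 0 := by rw [hgdef]; simp [hu0]
  have hg1 : g 1 = 0 := by rw [hgdef]; simp [hu1]
  -- almost-everywhere membership in the open interval
  have hone : ∀ᵐ (x : ℝ), x ≠ (1:ℝ) := by
    have h1 : {x : ℝ | ¬ x ≠ 1} = {1} := by ext y; simp
    rw [ae_iff, h1]; exact measure_singleton 1
  have hmem : ∀ᵐ x : ℝ, x ∈ Set.uIoc (0:ℝ) 1 → x ∈ Ioo (0:ℝ) 1 := by
    filter_upwards [hone] with x hx hxI
    rw [uIoc_of_le (by norm_num : (0:ℝ) ≤ 1)] at hxI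
    exact ⟨hxI.1, lt_of_le_of_ne hxI.2 hx⟩
  -- rewrite ∫ θ u as a quadratic-form pairing
  have hθu : (∫ x in (0:ℝ)..1, θ x * u x)
      = ∫ x in (0:ℝ)..1,
          (ε * iteratedDeriv 4 g x - lam * iteratedDeriv 2 g x
            + (κ + (deriv ρ x) ^ 2) * g x) * g x := by
    apply intervalIntegral.integral_congr_ae
    filter_upwards [hmem] with x hx hxI
    have hxo := hx hxI
    have hr := (hbnd x (Ioo_subset_Icc_self hxo)).1
    rw [← hBu x hxo]
    have hgx : g x = u x / deriv ρ x := by rw [hgdef]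
    rw [hgx]
    field_simp
    try ring
    try tauto
  have hθw : (∫ x in (0:ℝ)..1, (θ x * deriv ρ x) * wM x)
      = ∫ x in (0:ℝ)..1,
          (ε * iteratedDeriv 4 g x - lam * iteratedDeriv 2 g x
            + (κ + (deriv ρ x) ^ 2) * g x) * wM x := by
    apply intervalIntegral.integral_congr_ae
    filter_upwards [hmem] with x hx hxI
    have hxo := hx hxI
    have hr := (hbnd x (Ioo_subset_Icc_self hxo)).1
    rw [← hBu x hxo]
    have hgx : g x = u x / deriv ρ x := by rw [hgdef]
    rw [hgx]
    field_simp
    try ring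
    try tauto
  have hSL : (∫ x in (0:ℝ)..1,
        (ε * iteratedDeriv 4 g x - lam * iteratedDeriv 2 g x
          + (κ + (deriv ρ x) ^ 2) * g x) * wM x)
      = ∫ x in (0:ℝ)..1,
        (ε * iteratedDeriv 4 wM x - lam * iteratedDeriv 2 wM x + (κ + M ^ 2) * wM x) * wM x := by
    apply intervalIntegral.integral_congr_ae
    filter_upwards [hmem] with x hx hxI
    have hxo := hx hxI
    have hr := (hbnd x (Ioo_subset_Icc_self hxo)).1
    rw [hwMeq x hxo, ← hBu x hxo]
    have hgx : g x = u x / deriv ρ x := by rw [hgdef]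
    rw [hgx]
    field_simp
    try ring
    try tauto
  have hcM : ∀ x ∈ Icc (0:ℝ) 1, 0 ≤ (deriv ρ x) ^ 2 ∧ (deriv ρ x) ^ 2 ≤ M ^ 2 := by
    intro x hx
    refine ⟨sq_nonneg _, ?_⟩
    calc (deriv ρ x) ^ 2 = |deriv ρ x| ^ 2 := (sq_abs _).symm
      _ ≤ M ^ 2 := pow_le_pow_left₀ (abs_nonneg _) (hbnd x hx).2 2
  have quad := quad_compare κ lam ε M hκ hlam hε (fun x => (deriv ρ x) ^ 2)
    (hρx.pow 2) hcM g wM hu hwM hg0 hg1 hu''0 hu''1 hwM0 hwM1 hwM''0 hwM''1 hSL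
  have part1 : (∫ x in (0:ℝ)..1, (θ x * deriv ρ x) * wM x)
      ≤ ∫ x in (0:ℝ)..1, θ x * u x := by
    rw [hθu, hθw]; exact quad
  exact ⟨part1, by linarith⟩
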